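/- Let X⋆ be an n×m real matrix of rank k with n₁ + MS_{k-1}(X⋆) < n, and let X be obtained from X⋆ by inserting n₁ arbitrary rows. Then there exists an index set I ⊆ {1,...,n+n₁} with |I| = n and rank(X^I) = k; moreover, for any such I, the intersection of I with the original row indices has size at least n − n₁ > MS_{k-1}(X⋆), forcing the corresponding rows of X⋆ to have rank exactly k. -/

import Mathlib

open Matrix

noncomputable def subRows {n m : ℕ} (M : Matrix (Fin n) (Fin m) ℝ) (I : Finset (Fin n)) :
    Matrix {i // i ∈ I} (Fin m) ℝ := fun i j => M i.1 j

noncomputable def MS {n m : ℕ} (M : Matrix (Fin n) (Fin m) ℝ) (r : ℕ) : ℕ :=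
  sSup {c | ∃ I : Finset (Fin n), I.card = c ∧ (subRows M I).rank ≤ r}

lemma rank_eq_of_range_eq {n n' m : ℕ} {A : Matrix (Fin n) (Fin m) ℝ}
    {I : Finset (Fin n)} {B : Matrix (Fin n') (Fin m) ℝ}
    (h : Set.range (subRows A I) = Set.range B) : (subRows A I).rank = B.rank := by
  rw [rank_eq_finrank_span_row, rank_eq_finrank_span_row]
  change Module.finrank ℝ (Submodule.span ℝ (Set.range (subRows A I))) =
    Module.finrank ℝ (Submodule.span ℝ (Set.range B))
  rw [h]

lemma rank_subRows_le {n m : ℕ} (M : Matrix (Fin n) (Fin m) ℝ) (I : Finset (Fin n)) :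
    (subRows M I).rank ≤ M.rank := by
  rw [rank_eq_finrank_span_row, rank_eq_finrank_span_row]
  apply Submodule.finrank_mono
  apply Submodule.span_mono
  rintro _ ⟨i, rfl⟩
  exact ⟨i.1, rfl⟩

theorem exists_good_index_set (n n₁ m k : ℕ)
    (Xstar : Matrix (Fin n) (Fin m) ℝ) (hrank : Xstar.rank = k)
    (hMS : n₁ + MS Xstar (k - 1) < n)
    (X : Matrix (Fin (n + n₁)) (Fin m) ℝ)
    (ι : Fin n → Fin (n + n₁)) (hι : Function.Injective ι)
    (hX : ∀ i : Fin n, X (ι i) = Xstar i) :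
    (∃ I : Finset (Fin (n + n₁)), I.card = n ∧ (subRows X I).rank = k) ∧
    ∀ I : Finset (Fin (n + n₁)), I.card = n → (subRows X I).rank = k →
      (I ∩ Finset.image ι Finset.univ).card ≥ n - n₁ ∧
      n - n₁ > MS Xstar (k - 1) ∧
      (subRows Xstar (Finset.univ.filter fun i => ι i ∈ I)).rank = k := by
  classical
  have hbdd : BddAbove {c | ∃ I : Finset (Fin n), I.card = c ∧ (subRows Xstar I).rank ≤ k - 1} := by
    refine ⟨n, ?_⟩
    rintro c ⟨I, rfl, -⟩
    simpa using Finset.card_le_univ I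
  constructor
  · refine ⟨Finset.image ι Finset.univ, ?_, ?_⟩
    · simp [Finset.card_image_of_injective _ hι]
    · rw [← hrank]
      apply rank_eq_of_range_eq
      ext v
      constructor
      · rintro ⟨⟨j, hj⟩, rfl⟩
        obtain ⟨i, -, rfl⟩ := Finset.mem_image.mp hj
        exact ⟨i, (hX i).symm⟩
      · rintro ⟨i, rfl⟩
        exact ⟨⟨ι i, Finset.mem_image_of_mem ι (Finset.mem_univ i)⟩, hX i⟩
  · intro I hcard hrankI
    set A : Finset (Fin (n + n₁)) := Finset.image ι Finset.univ with hA
    have hAcard : A.card = n := by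
      simp [hA, Finset.card_image_of_injective _ hι]
    have hinter : (I ∩ A).card ≥ n - n₁ := by
      have h1 : I.card = (I ∩ A).card + (I \ A).card :=
        (Finset.card_inter_add_card_sdiff I A).symm
      have h2 : (I \ A).card ≤ n₁ := by
        have : (I \ A).card ≤ (Finset.univ \ A).card :=
          Finset.card_le_card (Finset.sdiff_subset_sdiff (Finset.subset_univ I) le_rfl)
        have h3 : (Finset.univ \ A).card = n + n₁ - n := by
          rw [Finset.card_sdiff_of_subset (Finset.subset_univ A), hAcard, Finset.card_univ,
            Fintype.card_fin]
        omega
      omega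
    set J : Finset (Fin n) := Finset.univ.filter fun i => ι i ∈ I with hJ
    have hJcard : J.card = (I ∩ A).card := by
      have himg : Finset.image ι J = I ∩ A := by
        ext j
        simp only [Finset.mem_image, Finset.mem_inter, hJ, Finset.mem_filter,
          Finset.mem_univ, true_and, hA]
        constructor
        · rintro ⟨i, hi, rfl⟩
          exact ⟨hi, ⟨i, rfl⟩⟩
        · rintro ⟨hjI, i, rfl⟩
          exact ⟨i, hjI, rfl⟩
      rw [← himg, Finset.card_image_of_injective _ hι]
    have hgt : n - n₁ > MS Xstar (k - 1) := by
      have : MS Xstar (k - 1) + n₁ < n := by omega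
      omega
    refine ⟨hinter, hgt, ?_⟩
    have hle : (subRows Xstar J).rank ≤ k := by
      rw [← hrank]; exact rank_subRows_le Xstar J
    by_contra hne
    have hle' : (subRows Xstar J).rank ≤ k - 1 := by omega
    have hmem : J.card ∈ {c | ∃ I : Finset (Fin n), I.card = c ∧ (subRows Xstar I).rank ≤ k - 1} :=
      ⟨J, rfl, hle'⟩
    have := le_csSup hbdd hmem
    rw [hJcard] at this
    have : (I ∩ A).card ≤ MS Xstar (k - 1) := this
    omega
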